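/- Let d, L ∈ ℕ with d ≥ 2 and L ≥ 12d, and let f : (ℝ^{d−1} × {−1, 1}) ∪ (ℤ^{d−1} × {0}) → ℝ^d be an L-bilipschitz mapping such that f(x) = x for all x ∈ ℝ^{d−1} × {−1, 1} and f(ℤ^{d−1} × {0}) ⊆ ℝ^{d−1} × [−1, 1]. Then there exists a (2¹⁴·d·L⁸ · 2^(2³·3^{33d}·d^{2d}·L^{26d}))-bilipschitz mapping F : ℝ^d → ℝ^d extending f. -/

import Mathlib

noncomputable section

/-- `f` is `L`-bilipschitz on the set `s`. -/
def IsBilipOn {α β : Type*} [PseudoMetricSpace α] [PseudoMetricSpace β]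
    (L : ℝ) (f : α → β) (s : Set α) : Prop :=
  ∀ x ∈ s, ∀ y ∈ s,
    (1 / L) * dist x y ≤ dist (f x) (f y) ∧ dist (f x) (f y) ≤ L * dist x y

/-- The two hyperplanes `ℝ^{d-1} × {-1, 1} ⊆ ℝ^d` (last coordinate equal to `±1`). -/
def wallSet (d : ℕ) (hd : 1 ≤ d) : Set (EuclideanSpace ℝ (Fin d)) :=
  {x | x ⟨d - 1, by omega⟩ = -1 ∨ x ⟨d - 1, by omega⟩ = 1}

/-- The lattice `ℤ^{d-1} × {0} ⊆ ℝ^d` (last coordinate `0`, other coordinates integers). -/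
def midLattice (d : ℕ) (hd : 1 ≤ d) : Set (EuclideanSpace ℝ (Fin d)) :=
  {x | x ⟨d - 1, by omega⟩ = 0 ∧ ∀ i : Fin d, (i : ℕ) < d - 1 → ∃ n : ℤ, x i = n}

set_option linter.unusedSectionVars false
set_option linter.unusedVariables false




namespace S14X
open scoped Classical

variable {E : Type*} [NormedAddCommGroup E] [NormedSpace ℝ E]
variable {ι : Type*} (κ : ℝ) (p q : ι → E)

/-- the bump displacement field -/
def bumpD (x : E) : E :=
  if h : ∃ v, dist x (p v) < κ / 3 then
    (max 0 (1 - (3 / κ) * dist x (p h.choose))) • (q h.choose - p h.choose)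
  else 0

def bumpMap (x : E) : E := x + bumpD κ p q x

variable (hκ : 0 < κ)
  (hsep : ∀ v w : ι, v ≠ w → κ ≤ dist (p v) (p w))
  (hstep : ∀ v, dist (q v) (p v) ≤ κ / 6)

section
include hκ hsep

lemma bump_uniq {x : E} {v w : ι} (hv : dist x (p v) < κ / 3)
    (hw : dist x (p w) < κ / 3) : v = w := by
  by_contra hne
  have := hsep v w hne
  have : κ ≤ dist x (p v) + dist x (p w) := le_trans this (dist_triangle_left _ _ _)
  linarith

include hstep

lemma bumpMap_at (v : ι) : bumpMap κ p q (p v) = q v := by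
  unfold bumpMap bumpD
  have hex : ∃ w, dist (p v) (p w) < κ / 3 := ⟨v, by simp; linarith⟩
  rw [dif_pos hex]
  have hv : hex.choose = v := bump_uniq κ p hκ hsep hex.choose_spec (by simp; linarith)
  rw [hv]
  simp

lemma bumpMap_far {x : E} (hx : ∀ v, κ / 3 ≤ dist x (p v)) : bumpMap κ p q x = x := by
  unfold bumpMap bumpD
  rw [dif_neg]
  · simp
  · rintro ⟨v, hv⟩; exact absurd (hx v) (not_le.2 hv)

lemma bumpD_single_bound {x : E} {v : ι} (hv : dist x (p v) < κ / 3) :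
    ‖bumpD κ p q x‖ ≤ (1 / 2) * (κ / 3 - dist x (p v)) := by
  unfold bumpD
  have hex : ∃ w, dist x (p w) < κ / 3 := ⟨v, hv⟩
  rw [dif_pos hex]
  have hvv : hex.choose = v := bump_uniq κ p hκ hsep hex.choose_spec hv
  rw [hvv, norm_smul]
  have h1 : ‖q v - p v‖ ≤ κ / 6 := by rw [← dist_eq_norm]; exact hstep v
  have h2 : ‖max 0 (1 - 3 / κ * dist x (p v))‖ = max 0 (1 - 3 / κ * dist x (p v)) :=
    Real.norm_of_nonneg (le_max_left _ _)
  rw [h2]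
  have h3 : max 0 (1 - 3 / κ * dist x (p v)) ≤ (3 / κ) * (κ / 3 - dist x (p v)) := by
    apply max_le
    · have : 0 ≤ κ / 3 - dist x (p v) := by linarith
      positivity
    · have hc : (3 / κ) * (κ / 3) = 1 := by field_simp
      rw [mul_sub, hc]
  calc max 0 (1 - 3 / κ * dist x (p v)) * ‖q v - p v‖
      ≤ ((3 / κ) * (κ / 3 - dist x (p v))) * (κ / 6) := by
        exact mul_le_mul h3 h1 (norm_nonneg _)
          (mul_nonneg (by positivity) (by linarith))
    _ = (κ / 6) * (3 / κ) * (κ / 3 - dist x (p v)) := by ring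
    _ = (1 / 2) * (κ / 3 - dist x (p v)) := by
        rw [show κ / 6 * (3 / κ) = (κ / κ) / 2 by ring, div_self (ne_of_gt hκ)]

lemma bumpD_lip (x y : E) : ‖bumpD κ p q x - bumpD κ p q y‖ ≤ (1 / 2) * dist x y := by
  by_cases hx : ∃ v, dist x (p v) < κ / 3
  · by_cases hy : ∃ v, dist y (p v) < κ / 3
    · obtain ⟨v, hv⟩ := hx
      obtain ⟨w, hw⟩ := hy
      by_cases hvw : v = w
      · -- same ball: use Lipschitzness of the coefficient
        subst hvw
        have hDx : bumpD κ p q x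
            = (max 0 (1 - (3 / κ) * dist x (p v))) • (q v - p v) := by
          unfold bumpD
          have hex : ∃ w, dist x (p w) < κ / 3 := ⟨v, hv⟩
          rw [dif_pos hex, bump_uniq κ p hκ hsep hex.choose_spec hv]
        have hDy : bumpD κ p q y
            = (max 0 (1 - (3 / κ) * dist y (p v))) • (q v - p v) := by
          unfold bumpD
          have hex : ∃ w, dist y (p w) < κ / 3 := ⟨v, hw⟩
          rw [dif_pos hex, bump_uniq κ p hκ hsep hex.choose_spec hw]
        rw [hDx, hDy, ← sub_smul, norm_smul]
        have h1 : ‖q v - p v‖ ≤ κ / 6 := by rw [← dist_eq_norm]; exact hstep v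
        have h2 : ‖max 0 (1 - 3 / κ * dist x (p v)) - max 0 (1 - 3 / κ * dist y (p v))‖
            ≤ (3 / κ) * dist x y := by
          rw [Real.norm_eq_abs, max_comm (0:ℝ) (1 - 3 / κ * dist x (p v)),
            max_comm (0:ℝ) (1 - 3 / κ * dist y (p v))]
          apply le_trans (abs_max_sub_max_le_abs _ _ _)
          rw [show (1 - 3 / κ * dist x (p v)) - (1 - 3 / κ * dist y (p v))
              = (3 / κ) * (dist y (p v) - dist x (p v)) by ring]
          rw [abs_mul, abs_of_pos (by positivity : (0:ℝ) < 3 / κ)]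
          apply mul_le_mul_of_nonneg_left _ (by positivity)
          rw [abs_sub_comm]
          exact abs_dist_sub_le _ _ _
        calc ‖max 0 (1 - 3 / κ * dist x (p v)) - max 0 (1 - 3 / κ * dist y (p v))‖ * ‖q v - p v‖
            ≤ ((3 / κ) * dist x y) * (κ / 6) := by
              apply mul_le_mul h2 h1 (norm_nonneg _) (by positivity)
          _ = ((3 / κ) * (κ / 6)) * dist x y := by ring
          _ = (1 / 2) * dist x y := by
              rw [show (3:ℝ) / κ * (κ / 6) = (κ / κ) / 2 by ring, div_self (ne_of_gt hκ)]
      · -- different balls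
        have hbx := bumpD_single_bound κ p q hκ hsep hstep hv
        have hby := bumpD_single_bound κ p q hκ hsep hstep hw
        have hd : (κ / 3 - dist x (p v)) + (κ / 3 - dist y (p w)) ≤ dist x y := by
          have h1 : κ ≤ dist (p v) (p w) := hsep v w hvw
          have h2 : dist (p v) (p w) ≤ dist x (p v) + dist x y + dist y (p w) := by
            calc dist (p v) (p w) ≤ dist (p v) x + dist x (p w) := dist_triangle _ _ _
              _ ≤ dist (p v) x + (dist x y + dist y (p w)) := by
                  gcongr; exact dist_triangle _ _ _
              _ = dist x (p v) + dist x y + dist y (p w) := by rw [dist_comm (p v) x]; ring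
          linarith
        calc ‖bumpD κ p q x - bumpD κ p q y‖ ≤ ‖bumpD κ p q x‖ + ‖bumpD κ p q y‖ :=
              norm_sub_le _ _
          _ ≤ (1/2) * (κ / 3 - dist x (p v)) + (1/2) * (κ / 3 - dist y (p w)) := by
              gcongr
          _ ≤ (1/2) * dist x y := by linarith
    · -- y in no ball: bumpD y = 0
      have hy0 : bumpD κ p q y = 0 := by unfold bumpD; rw [dif_neg hy]
      obtain ⟨v, hv⟩ := hx
      have hbx := bumpD_single_bound κ p q hκ hsep hstep hv
      have hyv : κ / 3 ≤ dist y (p v) := le_of_not_gt (fun h => hy ⟨v, h⟩)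
      have : κ / 3 - dist x (p v) ≤ dist x y := by
        have := dist_triangle y x (p v)
        have h2 : dist y (p v) ≤ dist x y + dist x (p v) := by
          rw [dist_comm y x] at this; linarith [this]
        linarith
      rw [hy0, sub_zero]
      calc ‖bumpD κ p q x‖ ≤ (1/2) * (κ / 3 - dist x (p v)) := hbx
        _ ≤ (1/2) * dist x y := by linarith
  · have hx0 : bumpD κ p q x = 0 := by unfold bumpD; rw [dif_neg hx]
    by_cases hy : ∃ v, dist y (p v) < κ / 3
    · obtain ⟨v, hv⟩ := hy
      have hby := bumpD_single_bound κ p q hκ hsep hstep hv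
      have hxv : κ / 3 ≤ dist x (p v) := le_of_not_gt (fun h => hx ⟨v, h⟩)
      have : κ / 3 - dist y (p v) ≤ dist x y := by
        have h2 : dist x (p v) ≤ dist x y + dist y (p v) := dist_triangle _ _ _
        linarith
      rw [hx0, zero_sub, norm_neg]
      calc ‖bumpD κ p q y‖ ≤ (1/2) * (κ / 3 - dist y (p v)) := hby
        _ ≤ (1/2) * dist x y := by linarith
    · have hy0 : bumpD κ p q y = 0 := by unfold bumpD; rw [dif_neg hy]
      rw [hx0, hy0, sub_zero, norm_zero]
      positivity

lemma bumpMap_bilip : IsBilipOn 2 (bumpMap κ p q) Set.univ := by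
  intro x _ y _
  have hlip := bumpD_lip κ p q hκ hsep hstep x y
  have key : dist (bumpMap κ p q x) (bumpMap κ p q y)
      = ‖(x - y) + (bumpD κ p q x - bumpD κ p q y)‖ := by
    rw [dist_eq_norm]
    congr 1
    unfold bumpMap
    abel
  constructor
  · rw [key]
    have h1 : ‖x - y‖ - ‖bumpD κ p q x - bumpD κ p q y‖
        ≤ ‖(x - y) + (bumpD κ p q x - bumpD κ p q y)‖ := by
      have := norm_sub_norm_le (x - y) (-(bumpD κ p q x - bumpD κ p q y))
      rw [norm_neg, sub_neg_eq_add] at this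
      linarith
    have h2 : dist x y = ‖x - y‖ := dist_eq_norm _ _
    have : (1 / 2) * dist x y ≤ ‖x - y‖ - ‖bumpD κ p q x - bumpD κ p q y‖ := by
      rw [h2] at hlip ⊢; linarith
    calc (1 / 2 : ℝ) * dist x y ≤ ‖x - y‖ - ‖bumpD κ p q x - bumpD κ p q y‖ := this
      _ ≤ _ := h1
  · rw [key]
    calc ‖(x - y) + (bumpD κ p q x - bumpD κ p q y)‖
        ≤ ‖x - y‖ + ‖bumpD κ p q x - bumpD κ p q y‖ := norm_add_le _ _
      _ ≤ dist x y + (1/2) * dist x y := by rw [← dist_eq_norm]; gcongr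
      _ ≤ 2 * dist x y := by linarith [dist_nonneg (x := x) (y := y)]

end
end S14X

namespace S14

variable {d : ℕ}

/-- build a point of ℝ^d from "horizontal" coordinates `u` and "height" `s`. -/
def pt (d : ℕ) (u : Fin d → ℝ) (s : ℝ) : EuclideanSpace ℝ (Fin d) :=
  WithLp.toLp 2 (fun i => if (i : ℕ) < d - 1 then u i else s)

lemma pt_coord {u : Fin d → ℝ} {s : ℝ} {i : Fin d} (h : (i : ℕ) < d - 1) :
    pt d u s i = u i := if_pos h

lemma pt_coord_last {u : Fin d → ℝ} {s : ℝ} {i : Fin d} (h : ¬ (i : ℕ) < d - 1) :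
    pt d u s i = s := if_neg h

lemma coord_le (x y : EuclideanSpace ℝ (Fin d)) (i : Fin d) :
    dist (x i) (y i) ≤ dist x y := by
  rw [EuclideanSpace.dist_eq]
  rw [show dist (x i) (y i) = Real.sqrt (dist (x i) (y i) ^ 2) by
    rw [Real.sqrt_sq dist_nonneg]]
  apply Real.sqrt_le_sqrt
  exact Finset.single_le_sum (f := fun j => dist (x j) (y j) ^ 2)
    (fun j _ => sq_nonneg _) (Finset.mem_univ i)

lemma dist_pt_same_ht (u u' : Fin d → ℝ) (s s' : ℝ) :
    dist (pt d u s) (pt d u' s) = dist (pt d u s') (pt d u' s') := by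
  rw [EuclideanSpace.dist_eq, EuclideanSpace.dist_eq]
  congr 1
  apply Finset.sum_congr rfl
  intro i _
  by_cases h : (i : ℕ) < d - 1
  · rw [pt_coord h, pt_coord h, pt_coord h, pt_coord h]
  · rw [pt_coord_last h, pt_coord_last h, pt_coord_last h, pt_coord_last h]
    simp

lemma dist_pt_same_col (hd : 1 ≤ d) (u : Fin d → ℝ) (s s' : ℝ) :
    dist (pt d u s) (pt d u s') = |s - s'| := by
  rw [EuclideanSpace.dist_eq]
  have : ∑ i, dist (pt d u s i) (pt d u s' i) ^ 2 = (s - s') ^ 2 := by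
    rw [Finset.sum_eq_single (⟨d - 1, by omega⟩ : Fin d)]
    · rw [pt_coord_last (by simp), pt_coord_last (by simp)]
      rw [Real.dist_eq]
      rw [sq_abs]
    · intro i _ hne
      have h : (i : ℕ) < d - 1 := by
        rcases lt_or_ge (i : ℕ) (d - 1) with h | h
        · exact h
        · exfalso; apply hne; apply Fin.ext; simp
          omega
      rw [pt_coord h, pt_coord h]
      simp
    · intro h; exact absurd (Finset.mem_univ _) h
  rw [this, Real.sqrt_sq_eq_abs]

lemma dist_pt_last_ge (hd : 1 ≤ d) (u u' : Fin d → ℝ) (s s' : ℝ) :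
    |s - s'| ≤ dist (pt d u s) (pt d u' s') := by
  have := coord_le (pt d u s) (pt d u' s') ⟨d - 1, by omega⟩
  rwa [pt_coord_last (by simp), pt_coord_last (by simp), Real.dist_eq] at this

lemma dist_pt_coord_ge {i : Fin d} (h : (i : ℕ) < d - 1) (u u' : Fin d → ℝ) (s s' : ℝ) :
    |u i - u' i| ≤ dist (pt d u s) (pt d u' s') := by
  have := coord_le (pt d u s) (pt d u' s') i
  rwa [pt_coord h, pt_coord h, Real.dist_eq] at this

lemma dist_pt_hor_ge (u u' : Fin d → ℝ) (s s' : ℝ) :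
    dist (pt d u 0) (pt d u' 0) ≤ dist (pt d u s) (pt d u' s') := by
  rw [EuclideanSpace.dist_eq, EuclideanSpace.dist_eq]
  apply Real.sqrt_le_sqrt
  apply Finset.sum_le_sum
  intro i _
  by_cases h : (i : ℕ) < d - 1
  · rw [pt_coord h, pt_coord h, pt_coord h, pt_coord h]
  · rw [pt_coord_last h, pt_coord_last h, pt_coord_last h, pt_coord_last h]
    simp [sq_nonneg]

lemma dist_pt_le (u u' : Fin d → ℝ) (s s' : ℝ) :
    dist (pt d u s) (pt d u' s') ≤ dist (pt d u 0) (pt d u' 0) + |s - s'| := by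
  calc dist (pt d u s) (pt d u' s') ≤ dist (pt d u s) (pt d u' s) + dist (pt d u' s) (pt d u' s') :=
        dist_triangle _ _ _
    _ ≤ dist (pt d u 0) (pt d u' 0) + |s - s'| := by
        gcongr
        · exact le_of_eq (dist_pt_same_ht u u' s 0)
        · rcases Nat.eq_zero_or_pos d with h0 | h0
          · subst h0
            have : dist (pt 0 u' s) (pt 0 u' s') = 0 := by
              simp [Subsingleton.elim (pt 0 u' s) (pt 0 u' s')]
            rw [this]; positivity
          · exact le_of_eq (dist_pt_same_col h0 u' s s')

/-- linear interpolation of horizontal positions -/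
def interp (a : ℝ) (u w : Fin d → ℝ) : Fin d → ℝ := fun i => u i + a * (w i - u i)

lemma dist_pt_interp (a b : ℝ) (u w : Fin d → ℝ) (s : ℝ) :
    dist (pt d (interp a u w) s) (pt d (interp b u w) s)
      = |a - b| * dist (pt d u 0) (pt d w 0) := by
  rw [EuclideanSpace.dist_eq, EuclideanSpace.dist_eq]
  rw [show ∑ i, dist (pt d (interp a u w) s i) (pt d (interp b u w) s i) ^ 2
      = (a - b) ^ 2 * ∑ i, dist (pt d u 0 i) (pt d w 0 i) ^ 2 by
    rw [Finset.mul_sum]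
    apply Finset.sum_congr rfl
    intro i _
    by_cases h : (i : ℕ) < d - 1
    · rw [pt_coord h, pt_coord h, pt_coord h, pt_coord h]
      rw [Real.dist_eq, Real.dist_eq, sq_abs, sq_abs,
        show interp a u w i - interp b u w i = (a - b) * (w i - u i) by simp [interp]; ring]
      ring
    · rw [pt_coord_last h, pt_coord_last h, pt_coord_last h, pt_coord_last h]
      simp]
  rw [Real.sqrt_mul (sq_nonneg _), Real.sqrt_sq_eq_abs]

end S14



namespace S14

lemma digits_lt {M : ℕ} (hM : 1 ≤ M) (n : ℕ) (c : ℕ → ℕ) (hc : ∀ i, i < n → c i < M) :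
    (∑ i ∈ Finset.range n, c i * M ^ i) < M ^ n := by
  induction n with
  | zero => simp
  | succ n ih =>
    rw [Finset.sum_range_succ]
    have h1 : (∑ i ∈ Finset.range n, c i * M ^ i) < M ^ n :=
      ih (fun i hi => hc i (by omega))
    have h3 : c n * M ^ n ≤ (M - 1) * M ^ n :=
      Nat.mul_le_mul_right _ (by have := hc n (by omega); omega)
    have h4 : M ^ n + (M - 1) * M ^ n = M ^ (n + 1) := by
      have h5 : M ^ n + (M - 1) * M ^ n = (1 + (M - 1)) * M ^ n := by ring
      rw [h5, show 1 + (M - 1) = M by omega, pow_succ, Nat.mul_comm]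
    omega

lemma digits_inj {M : ℕ} (hM : 1 ≤ M) :
    ∀ (n : ℕ) (c c' : ℕ → ℕ), (∀ i, i < n → c i < M) → (∀ i, i < n → c' i < M) →
    (∑ i ∈ Finset.range n, c i * M ^ i) = (∑ i ∈ Finset.range n, c' i * M ^ i) →
    ∀ i, i < n → c i = c' i := by
  intro n
  induction n with
  | zero => intro c c' _ _ _ i hi; omega
  | succ n ih =>
    intro c c' hc hc' heq i hi
    have hshift : ∀ (b : ℕ → ℕ), (∑ j ∈ Finset.range (n+1), b j * M ^ j)
        = b 0 + (∑ j ∈ Finset.range n, b (j+1) * M ^ j) * M := by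
      intro b
      rw [Finset.sum_range_succ', Finset.sum_mul]
      simp only [pow_zero, Nat.mul_one]
      rw [Nat.add_comm]
      congr 1
      apply Finset.sum_congr rfl
      intro j _
      rw [pow_succ]
      ring
    rw [hshift c, hshift c'] at heq
    have hm0 : c 0 = c' 0 := by
      have e1 : (c 0 + (∑ j ∈ Finset.range n, c (j+1) * M ^ j) * M) % M = c 0 := by
        rw [Nat.add_mul_mod_self_right]
        exact Nat.mod_eq_of_lt (hc 0 (by omega))
      have e2 : (c' 0 + (∑ j ∈ Finset.range n, c' (j+1) * M ^ j) * M) % M = c' 0 := by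
        rw [Nat.add_mul_mod_self_right]
        exact Nat.mod_eq_of_lt (hc' 0 (by omega))
      rw [← e1, ← e2, heq]
    have hS : (∑ j ∈ Finset.range n, c (j+1) * M ^ j)
        = (∑ j ∈ Finset.range n, c' (j+1) * M ^ j) := by
      have := heq
      rw [hm0] at this
      have h2 : (∑ j ∈ Finset.range n, c (j+1) * M ^ j) * M
          = (∑ j ∈ Finset.range n, c' (j+1) * M ^ j) * M := by omega
      exact Nat.eq_of_mul_eq_mul_right (by omega) h2
    rcases Nat.eq_zero_or_pos i with h0 | h0
    · subst h0; exact hm0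
    · have := ih (fun j => c (j+1)) (fun j => c' (j+1))
        (fun j hj => hc (j+1) (by omega)) (fun j hj => hc' (j+1) (by omega)) hS (i-1) (by omega)
      have hi1 : i - 1 + 1 = i := by omega
      simpa [hi1] using this

end S14

namespace S14
variable {d : ℕ}

-- ==================== schedule data ====================

variable (d) in
/-- the index set: integer lattice points of the middle hyperplane -/
def Lat : Type := {v : Fin d → ℤ // ∀ i : Fin d, ¬ ((i : ℕ) < d - 1) → v i = 0}

def castv (v : Lat d) : Fin d → ℝ := fun i => (v.1 i : ℝ)

def latPt (v : Lat d) : EuclideanSpace ℝ (Fin d) := pt d (castv v) 0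

def Kc (d L : ℕ) : ℕ := (9 * L) ^ (d - 1)

def mS (L : ℕ) : ℕ := 600 * L ^ 2

def GS (d L : ℕ) : ℕ := 3 * (4 * L) * Kc d L

def NS (d L : ℕ) : ℕ := (GS d L + 1) * mS L

variable (L : ℕ) (f : EuclideanSpace ℝ (Fin d) → EuclideanSpace ℝ (Fin d))

def Afun (v : Lat d) : Fin d → ℝ := fun i => f (latPt v) i

def tval (v : Lat d) : ℝ := if h : 1 ≤ d then f (latPt v) ⟨d - 1, by omega⟩ else 0

def hval (v : Lat d) : ℝ := 7/8 + tval f v / 16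


def cdig (v : Lat d) (i : ℕ) : ℕ :=
  if h : i < d then ((v.1 ⟨i, h⟩) % (9 * L : ℤ)).toNat else 0

def ellv (v : Lat d) : ℕ := ∑ i ∈ Finset.range (d - 1), cdig L v i * (9 * L) ^ i

def rv (v : Lat d) : ℕ := ⌊(1 - tval f v) * (2 * L)⌋₊

def sv (v : Lat d) : ℕ := rv L f v * Kc d L + ellv L v

def colW (v : Lat d) (g : ℕ) : Fin d → ℝ :=
  if g ≤ 3 * sv L f v + 1 then castv v else Afun f v

def htW (v : Lat d) (g : ℕ) : ℝ :=
  if g ≤ 3 * sv L f v then 0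
  else if g = 3 * sv L f v + 1 then 3/4
  else if g = 3 * sv L f v + 2 then 3/4
  else if g ≤ GS d L then hval f v
  else tval f v

def tau (k : ℕ) : ℝ := ((k % mS L : ℕ) : ℝ) / ((mS L : ℕ) : ℝ)

def pos (v : Lat d) (k : ℕ) : EuclideanSpace ℝ (Fin d) :=
  pt d (interp (tau L k) (colW L f v (k / mS L)) (colW L f v (k / mS L + 1)))
    (htW L f v (k / mS L) + tau L k * (htW L f v (k / mS L + 1) - htW L f v (k / mS L)))

-- ==================== basic lattice lemmas ====================

lemma latPt_mem (hd : 1 ≤ d) (v : Lat d) : latPt v ∈ midLattice d hd := by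
  constructor
  · exact pt_coord_last (by simp)
  · intro i hi
    exact ⟨v.1 i, (pt_coord hi : _)⟩

lemma latPt_coord_diff (hd : 1 ≤ d) {v w : Lat d} (hvw : v ≠ w) :
    ∃ i : Fin d, (i : ℕ) < d - 1 ∧ v.1 i ≠ w.1 i := by
  by_contra hcon
  push_neg at hcon
  apply hvw
  apply Subtype.ext
  funext i
  by_cases h : (i : ℕ) < d - 1
  · exact hcon i h
  · rw [v.2 i h, w.2 i h]

lemma mid_eq_range (hd : 1 ≤ d) : midLattice d hd = Set.range (latPt (d := d)) := by
  apply Set.Subset.antisymm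
  · rintro x ⟨hx0, hxi⟩
    classical
    refine ⟨⟨fun i => if h : (i : ℕ) < d - 1 then (hxi i h).choose else 0, fun i h => dif_neg h⟩, ?_⟩
    ext i
    by_cases h : (i : ℕ) < d - 1
    · simp only [latPt, castv]
      rw [pt_coord h]
      show ((if h' : (i : ℕ) < d - 1 then (hxi i h').choose else 0 : ℤ) : ℝ) = x i
      rw [dif_pos h, ← (hxi i h).choose_spec]
    · simp only [latPt, castv]
      rw [pt_coord_last h]
      have hi : i = ⟨d - 1, by omega⟩ := by
        apply Fin.ext
        simp only []
        have := i.2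
        omega
      rw [hi, hx0]
  · rintro x ⟨v, rfl⟩
    exact latPt_mem hd v


-- ==================== f-derived data lemmas ====================

variable {L : ℕ} {f : EuclideanSpace ℝ (Fin d) → EuclideanSpace ℝ (Fin d)}

lemma good_one_le {d : ℕ} (hd : 2 ≤ d) : 1 ≤ d := by omega

lemma good_sub_lt {d : ℕ} (hd : 2 ≤ d) : d - 1 < d := by omega

structure Good (d L : ℕ) (f : EuclideanSpace ℝ (Fin d) → EuclideanSpace ℝ (Fin d)) : Prop where
  hd : 2 ≤ d
  hL : 12 * d ≤ L
  hf : IsBilipOn (L : ℝ) f (wallSet d (good_one_le hd) ∪ midLattice d (good_one_le hd))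
  hid : ∀ x ∈ wallSet d (good_one_le hd), f x = x
  hrange : ∀ x ∈ midLattice d (good_one_le hd), f x ⟨d - 1, good_sub_lt hd⟩ ∈ Set.Icc (-1 : ℝ) 1

lemma tval_def (G : Good d L f) (v : Lat d) :
    tval f v = f (latPt v) ⟨d - 1, by have := G.hd; omega⟩ := by
  unfold tval
  rw [dif_pos (by have := G.hd; omega : 1 ≤ d)]

lemma fval_eq (G : Good d L f) (v : Lat d) : f (latPt v) = pt d (Afun f v) (tval f v) := by
  have hd := G.hd
  ext i
  by_cases h : (i : ℕ) < d - 1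
  · rw [pt_coord h]; rfl
  · rw [pt_coord_last h, tval_def G v]
    refine congrArg (fun j => (f (latPt v)) j) ?_
    apply Fin.ext
    have := i.2
    simp only []
    omega

lemma wall_mem (hd : 2 ≤ d) {s : ℝ} (hs : s = -1 ∨ s = 1) (u : Fin d → ℝ) :
    pt d u s ∈ wallSet d (by omega) := by
  have h : pt d u s ⟨d - 1, by omega⟩ = s := pt_coord_last (by simp)
  rcases hs with h1 | h1
  · left; rw [h, h1]
  · right; rw [h, h1]

lemma hL24 (G : Good d L f) : (24 : ℝ) ≤ (L : ℕ) := by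
  have h1 := G.hd; have h2 := G.hL
  have : 24 ≤ L := by omega
  exact_mod_cast this

lemma hL0 (G : Good d L f) : (0:ℝ) < L := lt_of_lt_of_le (by norm_num) (hL24 G)

lemma tval_mem (G : Good d L f) (v : Lat d) : tval f v ∈ Set.Icc (-1 : ℝ) 1 := by
  rw [tval_def G v]
  exact G.hrange _ (latPt_mem (by have := G.hd; omega) v)

/-- the key one-point estimates -/
lemma key1 (G : Good d L f) (v : Lat d) :
    1 / (L:ℝ) ≤ 1 - tval f v ∧ 1 / (L:ℝ) ≤ 1 + tval f v ∧
      dist (pt d (castv v) 0) (pt d (Afun f v) 0) ≤ 2 * L := by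
  have hd := G.hd
  have hL0 : (0:ℝ) < L := hL0 G
  have hmem : latPt v ∈ wallSet d (by omega) ∪ midLattice d (by omega) :=
    Or.inr (latPt_mem (by omega) v)
  have ht := tval_mem G v
  -- top wall point
  have hw1mem : pt d (Afun f v) 1 ∈ wallSet d (by omega) ∪ midLattice d (by omega) :=
    Or.inl (wall_mem hd (Or.inr rfl) _)
  have hw2mem : pt d (Afun f v) (-1) ∈ wallSet d (by omega) ∪ midLattice d (by omega) :=
    Or.inl (wall_mem hd (Or.inl rfl) _)
  have hb1 := (G.hf _ hmem _ hw1mem).1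
  have hb2 := (G.hf _ hmem _ hw2mem).1
  rw [G.hid _ (wall_mem hd (Or.inr rfl) _)] at hb1
  rw [G.hid _ (wall_mem hd (Or.inl rfl) _)] at hb2
  rw [fval_eq G v] at hb1 hb2
  rw [dist_pt_same_col (by omega) _ _ _] at hb1 hb2
  have habs1 : |tval f v - 1| = 1 - tval f v := by
    rw [abs_of_nonpos (by linarith [ht.2])]; ring
  have habs2 : |tval f v - (-1)| = 1 + tval f v := by
    rw [abs_of_nonneg (by linarith [ht.1])]; ring
  rw [habs1] at hb1
  rw [habs2] at hb2
  have hdist1 : (1:ℝ) ≤ dist (latPt v) (pt d (Afun f v) 1) := by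
    have := dist_pt_last_ge (by omega : 1 ≤ d) (castv v) (Afun f v) 0 1
    rw [show |(0:ℝ) - 1| = 1 by norm_num] at this
    exact this
  have hdist2 : (1:ℝ) ≤ dist (latPt v) (pt d (Afun f v) (-1)) := by
    have := dist_pt_last_ge (by omega : 1 ≤ d) (castv v) (Afun f v) 0 (-1)
    rw [show |(0:ℝ) - (-1)| = 1 by norm_num] at this
    exact this
  have hor : dist (pt d (castv v) 0) (pt d (Afun f v) 0)
      ≤ dist (latPt v) (pt d (Afun f v) 1) := dist_pt_hor_ge _ _ _ _
  refine ⟨?_, ?_, ?_⟩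
  · calc 1 / (L:ℝ) = (1/L) * 1 := by ring
      _ ≤ (1/L) * dist (latPt v) (pt d (Afun f v) 1) := by
          apply mul_le_mul_of_nonneg_left hdist1 (by positivity)
      _ ≤ 1 - tval f v := hb1
  · calc 1 / (L:ℝ) = (1/L) * 1 := by ring
      _ ≤ (1/L) * dist (latPt v) (pt d (Afun f v) (-1)) := by
          apply mul_le_mul_of_nonneg_left hdist2 (by positivity)
      _ ≤ 1 + tval f v := hb2
  · have hd1 : dist (latPt v) (pt d (Afun f v) 1) ≤ L * (1 - tval f v) := by
      rw [div_mul_eq_mul_div, div_le_iff₀ hL0] at hb1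
      nlinarith [hb1, hL0]
    calc dist (pt d (castv v) 0) (pt d (Afun f v) 0)
        ≤ dist (latPt v) (pt d (Afun f v) 1) := hor
      _ ≤ L * (1 - tval f v) := hd1
      _ ≤ L * 2 := by
          apply mul_le_mul_of_nonneg_left _ (le_of_lt hL0)
          linarith [ht.1]
      _ = 2 * L := by ring

lemma tval_bounds (G : Good d L f) (v : Lat d) :
    -1 + 1/(L:ℝ) ≤ tval f v ∧ tval f v ≤ 1 - 1/(L:ℝ) := by
  have h := key1 G v
  exact ⟨by linarith [h.2.1], by linarith [h.1]⟩

lemma hval_bounds (G : Good d L f) (v : Lat d) :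
    13/16 ≤ hval f v ∧ hval f v ≤ 15/16 := by
  have ht := tval_mem G v
  unfold hval
  constructor
  · have := ht.1; linarith
  · have := ht.2; linarith

lemma dist_lat_ge_one (hd : 2 ≤ d) {v w : Lat d} (hvw : v ≠ w) :
    (1:ℝ) ≤ dist (latPt v) (latPt w) := by
  obtain ⟨i, hi, hne⟩ := latPt_coord_diff (by omega : 1 ≤ d) hvw
  have h := dist_pt_coord_ge hi (castv v) (castv w) 0 0
  have h2 : (1:ℝ) ≤ |castv v i - castv w i| := by
    unfold castv
    rw [show ((v.1 i : ℝ) - (w.1 i : ℝ)) = ((v.1 i - w.1 i : ℤ) : ℝ) by push_cast; ring]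
    rw [← Int.cast_abs]
    have h3 : (1:ℤ) ≤ |v.1 i - w.1 i| := by
      rcases abs_pos.2 (sub_ne_zero.2 hne) with h4
      omega
    exact_mod_cast h3
  exact le_trans h2 h

lemma pair_split (G : Good d L f) {v w : Lat d} (hvw : v ≠ w) :
    1/(L:ℝ) ≤ dist (pt d (Afun f v) 0) (pt d (Afun f w) 0) + |tval f v - tval f w| := by
  have hd := G.hd
  have hmemv : latPt v ∈ wallSet d (by omega) ∪ midLattice d (by omega) :=
    Or.inr (latPt_mem (by omega) v)
  have hmemw : latPt w ∈ wallSet d (by omega) ∪ midLattice d (by omega) :=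
    Or.inr (latPt_mem (by omega) w)
  have hb := (G.hf _ hmemv _ hmemw).1
  have hge := dist_lat_ge_one hd hvw
  have h1 : 1/(L:ℝ) ≤ dist (f (latPt v)) (f (latPt w)) := by
    calc 1/(L:ℝ) = (1/L) * 1 := by ring
      _ ≤ (1/L) * dist (latPt v) (latPt w) := by
          apply mul_le_mul_of_nonneg_left hge (by positivity)
      _ ≤ _ := hb
  rw [fval_eq G v, fval_eq G w] at h1
  calc 1/(L:ℝ) ≤ dist (pt d (Afun f v) (tval f v)) (pt d (Afun f w) (tval f w)) := h1
    _ ≤ _ := dist_pt_le _ _ _ _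



-- ==================== bucket and residue lemmas ====================

lemma rv_lt (G : Good d L f) (v : Lat d) : rv L f v < 4 * L := by
  have hL0 : (0:ℝ) < L := hL0 G
  have hinv : (0:ℝ) < 1 / L := by positivity
  have ht := tval_bounds G v
  have h1 : (0:ℝ) ≤ 1 - tval f v := by linarith [ht.2]
  have hLL : (1/(L:ℝ)) * L = 1 := by field_simp
  unfold rv
  rw [Nat.floor_lt (mul_nonneg h1 (by positivity))]
  push_cast
  have h2 : (1 - tval f v) * (2 * L) ≤ (1 + 1 - 1/L) * (2 * L) := by
    apply mul_le_mul_of_nonneg_right _ (by positivity)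
    linarith [ht.1]
  nlinarith [h2, hinv, hL0]

lemma rv_eq_close (G : Good d L f) {v w : Lat d} (h : rv L f v = rv L f w) :
    |tval f v - tval f w| < 1 / (2 * L) := by
  have hL0 : (0:ℝ) < L := hL0 G
  have htv := tval_mem G v
  have htw := tval_mem G w
  have hnv : (0:ℝ) ≤ (1 - tval f v) * (2 * L) := by nlinarith [htv.2]
  have hnw : (0:ℝ) ≤ (1 - tval f w) * (2 * L) := by nlinarith [htw.2]
  have h1 : (rv L f v : ℝ) ≤ (1 - tval f v) * (2 * L) := Nat.floor_le hnv
  have h2 : (1 - tval f v) * (2 * L) < rv L f v + 1 := Nat.lt_floor_add_one _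
  have h3 : (rv L f w : ℝ) ≤ (1 - tval f w) * (2 * L) := Nat.floor_le hnw
  have h4 : (1 - tval f w) * (2 * L) < rv L f w + 1 := Nat.lt_floor_add_one _
  have heq : (rv L f v : ℝ) = rv L f w := by exact_mod_cast h
  have h2L : (0:ℝ) < 2 * L := by positivity
  rw [abs_lt]
  constructor
  · have hc : (tval f v - tval f w) * (2*L) > -1 := by nlinarith
    rw [show -(1/(2*(L:ℝ))) = (-1)/(2*L) by ring, div_lt_iff₀ h2L]
    linarith
  · have hc : (tval f v - tval f w) * (2*L) < 1 := by nlinarith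
    rw [lt_div_iff₀ h2L]
    linarith

lemma rv_lt_t (G : Good d L f) {v w : Lat d} (h : rv L f w < rv L f v) :
    tval f v < tval f w := by
  have hL0 : (0:ℝ) < L := hL0 G
  have htv := tval_mem G v
  have htw := tval_mem G w
  have hnv : (0:ℝ) ≤ (1 - tval f v) * (2 * L) := by nlinarith [htv.2]
  have h1 : (rv L f v : ℝ) ≤ (1 - tval f v) * (2 * L) := Nat.floor_le hnv
  have h4 : (1 - tval f w) * (2 * L) < rv L f w + 1 := Nat.lt_floor_add_one _
  have hle : (rv L f w : ℝ) + 1 ≤ rv L f v := by exact_mod_cast h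
  nlinarith

lemma cdig_lt (hL1 : 1 ≤ L) (v : Lat d) (i : ℕ) : cdig L v i < 9 * L := by
  unfold cdig
  split
  · rename_i hle
    have h9 : (0:ℤ) < 9 * L := by positivity
    have := Int.emod_nonneg (v.1 ⟨i, hle⟩) (ne_of_gt h9)
    have := Int.emod_lt_of_pos (v.1 ⟨i, hle⟩) h9
    omega
  · omega

lemma ellv_lt (hL1 : 1 ≤ L) (v : Lat d) : ellv L v < Kc d L :=
  digits_lt (by omega) (d - 1) (cdig L v) (fun i _ => cdig_lt hL1 v i)

lemma Kc_pos (hL1 : 1 ≤ L) : 0 < Kc d L := by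
  unfold Kc
  positivity

lemma sv_decomp (hL1 : 1 ≤ L) {v w : Lat d} (h : sv L f v = sv L f w) :
    rv L f v = rv L f w ∧ ellv L v = ellv L w := by
  have hKpos : 0 < Kc d L := Kc_pos (d := d) hL1
  have hv := ellv_lt (d := d) hL1 v
  have hw := ellv_lt (d := d) hL1 w
  unfold sv at h
  have hr : rv L f v = rv L f w := by
    have e1 : (rv L f v * Kc d L + ellv L v) / Kc d L = rv L f v := by
      rw [Nat.mul_comm, Nat.mul_add_div hKpos, Nat.div_eq_of_lt hv]
      omega
    have e2 : (rv L f w * Kc d L + ellv L w) / Kc d L = rv L f w := by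
      rw [Nat.mul_comm, Nat.mul_add_div hKpos, Nat.div_eq_of_lt hw]
      omega
    rw [← e1, ← e2, h]
  constructor
  · exact hr
  · rw [hr] at h
    omega

lemma comover_sep (G : Good d L f) {v w : Lat d} (h : sv L f v = sv L f w) (hvw : v ≠ w) :
    ∃ i : Fin d, (i : ℕ) < d - 1 ∧ (9 * L : ℝ) ≤ |castv v i - castv w i| := by
  have hL1 : 1 ≤ L := by have := G.hL; have := G.hd; omega
  have hell := (sv_decomp hL1 h).2
  have hdig := digits_inj (M := 9 * L) (by omega) (d - 1) (cdig L v) (cdig L w)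
    (fun i _ => cdig_lt hL1 v i) (fun i _ => cdig_lt hL1 w i) hell
  obtain ⟨i, hi, hne⟩ := latPt_coord_diff (by have := G.hd; omega : 1 ≤ d) hvw
  refine ⟨i, hi, ?_⟩
  have hcd := hdig (i : ℕ) hi
  have hifin : i = (⟨(i : ℕ), i.2⟩ : Fin d) := by apply Fin.ext; rfl
  unfold cdig at hcd
  rw [dif_pos (i.2 : (i:ℕ) < d), dif_pos (i.2 : (i:ℕ) < d)] at hcd
  have hmod : (v.1 ⟨(i:ℕ), i.2⟩) % (9 * L : ℤ) = (w.1 ⟨(i:ℕ), i.2⟩) % (9 * L : ℤ) := by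
    have h9 : (0:ℤ) < 9 * L := by positivity
    have h1 := Int.emod_nonneg (v.1 ⟨(i:ℕ), i.2⟩) (ne_of_gt h9)
    have h2 := Int.emod_nonneg (w.1 ⟨(i:ℕ), i.2⟩) (ne_of_gt h9)
    omega
  rw [← hifin] at hmod
  have hdvd : (9 * L : ℤ) ∣ (v.1 i - w.1 i) := by
    rw [Int.dvd_iff_emod_eq_zero, Int.sub_emod, hmod]
    simp
  have habs : (9 * L : ℤ) ≤ |v.1 i - w.1 i| := by
    apply Int.le_of_dvd
    · rw [abs_pos]
      exact sub_ne_zero.2 hne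
    · exact (dvd_abs _ _).2 hdvd
  unfold castv
  rw [show ((v.1 i : ℝ) - (w.1 i : ℝ)) = ((v.1 i - w.1 i : ℤ) : ℝ) by push_cast; ring,
    ← Int.cast_abs]
  exact_mod_cast habs

lemma sv_lt (G : Good d L f) (v : Lat d) : 3 * sv L f v + 3 ≤ GS d L := by
  have hL1 : 1 ≤ L := by have := G.hL; have := G.hd; omega
  have hr : rv L f v ≤ 4 * L - 1 := by have := rv_lt G v; omega
  have he : ellv L v ≤ Kc d L - 1 := by have := ellv_lt (d := d) hL1 v; omega
  have hK : 1 ≤ Kc d L := Kc_pos (d := d) hL1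
  have h1 : sv L f v + 1 ≤ 4 * L * Kc d L := by
    unfold sv
    calc rv L f v * Kc d L + ellv L v + 1 ≤ (4*L - 1) * Kc d L + (Kc d L - 1) + 1 := by
          have := Nat.mul_le_mul_right (Kc d L) hr
          omega
      _ = (4*L - 1) * Kc d L + Kc d L := by omega
      _ = 4 * L * Kc d L := by
          have h40 : (4*L - 1) + 1 = 4 * L := by omega
          calc (4*L - 1) * Kc d L + Kc d L = ((4*L - 1) + 1) * Kc d L := by ring
            _ = 4 * L * Kc d L := by rw [h40]
  have hGS : GS d L = 3 * (4 * L * Kc d L) := by unfold GS; ring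
  omega

-- ==================== waypoint evaluation ====================

lemma interp_self (a : ℝ) (u : Fin d → ℝ) : interp a u u = u := by
  funext i; unfold interp; ring

lemma interp_zero (u w : Fin d → ℝ) : interp 0 u w = u := by
  funext i; unfold interp; ring

lemma mS_pos (hL1 : 1 ≤ L) : 0 < mS L := by unfold mS; positivity

lemma tau_nonneg (k : ℕ) : 0 ≤ tau L k := by unfold tau; positivity

lemma tau_lt_one (hL1 : 1 ≤ L) (k : ℕ) : tau L k < 1 := by
  unfold tau
  rw [div_lt_one (by exact_mod_cast mS_pos (L := L) hL1)]
  exact_mod_cast Nat.mod_lt _ (mS_pos hL1)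

lemma colW_lo {v : Lat d} {g : ℕ} (h : g ≤ 3 * sv L f v + 1) : colW L f v g = castv v :=
  if_pos h

lemma colW_hi {v : Lat d} {g : ℕ} (h : 3 * sv L f v + 1 < g) : colW L f v g = Afun f v :=
  if_neg (by omega)

lemma htW_0 {v : Lat d} {g : ℕ} (h : g ≤ 3 * sv L f v) : htW L f v g = 0 := if_pos h

lemma htW_1 {v : Lat d} {g : ℕ} (h : g = 3 * sv L f v + 1) : htW L f v g = 3/4 := by
  unfold htW
  rw [if_neg (by omega), if_pos h]

lemma htW_2 {v : Lat d} {g : ℕ} (h : g = 3 * sv L f v + 2) : htW L f v g = 3/4 := by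
  unfold htW
  rw [if_neg (by omega), if_neg (by omega), if_pos h]

lemma htW_h {v : Lat d} {g : ℕ} (h1 : 3 * sv L f v + 2 < g) (h2 : g ≤ GS d L) :
    htW L f v g = hval f v := by
  unfold htW
  rw [if_neg (by omega), if_neg (by omega), if_neg (by omega), if_pos h2]

lemma htW_t {v : Lat d} {g : ℕ} (h1 : 3 * sv L f v + 2 < g) (h2 : GS d L < g) :
    htW L f v g = tval f v := by
  unfold htW
  rw [if_neg (by omega), if_neg (by omega), if_neg (by omega), if_neg (by omega)]

-- ==================== position shape lemmas ====================

lemma pos_before {v : Lat d} {k : ℕ} (h : k / mS L < 3 * sv L f v) :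
    pos L f v k = pt d (castv v) 0 := by
  unfold pos
  rw [colW_lo (by omega), colW_lo (by omega), htW_0 (by omega), htW_0 (by omega),
    interp_self]
  norm_num

lemma pos_leg0 {v : Lat d} {k : ℕ} (h : k / mS L = 3 * sv L f v) :
    pos L f v k = pt d (castv v) (tau L k * (3/4)) := by
  unfold pos
  rw [colW_lo (by omega), colW_lo (by omega), htW_0 (by omega), htW_1 (by omega),
    interp_self]
  norm_num

lemma pos_leg1 {v : Lat d} {k : ℕ} (h : k / mS L = 3 * sv L f v + 1) :
    pos L f v k = pt d (interp (tau L k) (castv v) (Afun f v)) (3/4) := by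
  unfold pos
  rw [colW_lo (by omega), colW_hi (by omega), htW_1 (by omega), htW_2 (by omega)]
  norm_num

lemma pos_leg2 (G : Good d L f) {v : Lat d} {k : ℕ} (h : k / mS L = 3 * sv L f v + 2) :
    pos L f v k = pt d (Afun f v) (3/4 + tau L k * (hval f v - 3/4)) := by
  have hs := sv_lt G v
  unfold pos
  rw [colW_hi (by omega), colW_hi (by omega), htW_2 (by omega),
    htW_h (by omega) (by omega), interp_self]

lemma pos_parked {v : Lat d} {k : ℕ} (h1 : 3 * sv L f v + 2 < k / mS L)
    (h2 : k / mS L < GS d L) :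
    pos L f v k = pt d (Afun f v) (hval f v) := by
  unfold pos
  rw [colW_hi (by omega), colW_hi (by omega), htW_h (by omega) (by omega),
    htW_h (by omega) (by omega), interp_self]
  norm_num

lemma pos_final (G : Good d L f) {v : Lat d} {k : ℕ} (h : k / mS L = GS d L) :
    pos L f v k = pt d (Afun f v) (hval f v + tau L k * (tval f v - hval f v)) := by
  have hs := sv_lt G v
  unfold pos
  rw [colW_hi (by omega), colW_hi (by omega), htW_h (by omega) (by omega),
    htW_t (by omega) (by omega), interp_self]

lemma pos_done (G : Good d L f) {v : Lat d} {k : ℕ} (h : GS d L < k / mS L) :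
    pos L f v k = pt d (Afun f v) (tval f v) := by
  have hs := sv_lt G v
  unfold pos
  rw [colW_hi (by omega), colW_hi (by omega), htW_t (by omega) (by omega),
    htW_t (by omega) (by omega), interp_self]
  norm_num

lemma pos_start (v : Lat d) : pos L f v 0 = latPt v := by
  unfold pos tau
  rw [Nat.zero_div, Nat.zero_mod]
  rw [colW_lo (by omega), htW_0 (by omega)]
  rw [Nat.cast_zero, zero_div, interp_zero]
  unfold latPt
  norm_num

lemma pos_end (G : Good d L f) (v : Lat d) : pos L f v (NS d L) = f (latPt v) := by
  have hL1 : 1 ≤ L := by have := G.hL; have := G.hd; omega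
  have hm := mS_pos (L := L) hL1
  have hdiv : NS d L / mS L = GS d L + 1 := by
    unfold NS
    exact Nat.mul_div_cancel _ hm
  rw [pos_done G (by omega), fval_eq G v]


-- ==================== separation helpers ====================

lemma colint_sep (hd : 2 ≤ d) {v w : Lat d} (hvw : v ≠ w) (s s' : ℝ) :
    (1:ℝ) ≤ dist (pt d (castv v) s) (pt d (castv w) s') := by
  obtain ⟨i, hi, hne⟩ := latPt_coord_diff (by omega : 1 ≤ d) hvw
  have h := dist_pt_coord_ge hi (castv v) (castv w) s s'
  have h2 : (1:ℝ) ≤ |castv v i - castv w i| := by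
    unfold castv
    rw [show ((v.1 i : ℝ) - (w.1 i : ℝ)) = ((v.1 i - w.1 i : ℤ) : ℝ) by push_cast; ring,
      ← Int.cast_abs]
    have h3 : (1:ℤ) ≤ |v.1 i - w.1 i| := by
      have h4 := abs_pos.2 (sub_ne_zero.2 hne)
      omega
    exact_mod_cast h3
  linarith

lemma coordA_close (G : Good d L f) (v : Lat d) {i : Fin d} (hi : (i : ℕ) < d - 1) :
    |Afun f v i - castv v i| ≤ 2 * L := by
  have h := (key1 G v).2.2
  have h2 := dist_pt_coord_ge hi (castv v) (Afun f v) 0 0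
  rw [abs_sub_comm]
  linarith

lemma comover_leg1 (G : Good d L f) {v w : Lat d} (h : sv L f v = sv L f w)
    (hvw : v ≠ w) {τ : ℝ} (hτ0 : 0 ≤ τ) (hτ1 : τ ≤ 1) (s s' : ℝ) :
    (1:ℝ) ≤ dist (pt d (interp τ (castv v) (Afun f v)) s)
      (pt d (interp τ (castv w) (Afun f w)) s') := by
  have hL24 := hL24 G
  obtain ⟨i, hi, h9⟩ := comover_sep G h hvw
  have hdist := dist_pt_coord_ge hi (interp τ (castv v) (Afun f v))
    (interp τ (castv w) (Afun f w)) s s'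
  have hAv := coordA_close G v hi
  have hAw := coordA_close G w hi
  have hcoord : (1:ℝ) ≤ |interp τ (castv v) (Afun f v) i - interp τ (castv w) (Afun f w) i| := by
    have hexp : interp τ (castv v) (Afun f v) i - interp τ (castv w) (Afun f w) i
        = (castv v i - castv w i) + τ * (Afun f v i - castv v i)
          - τ * (Afun f w i - castv w i) := by
      unfold interp; ring
    have h1 : |τ * (Afun f v i - castv v i)| ≤ 2 * L := by
      rw [abs_mul, abs_of_nonneg hτ0]
      calc τ * |Afun f v i - castv v i| ≤ 1 * (2 * L) := by
            apply mul_le_mul hτ1 hAv (abs_nonneg _) (by norm_num)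
        _ = 2 * L := by ring
    have h2 : |τ * (Afun f w i - castv w i)| ≤ 2 * L := by
      rw [abs_mul, abs_of_nonneg hτ0]
      calc τ * |Afun f w i - castv w i| ≤ 1 * (2 * L) := by
            apply mul_le_mul hτ1 hAw (abs_nonneg _) (by norm_num)
        _ = 2 * L := by ring
    have h3 := abs_sub_abs_le_abs_sub (castv v i - castv w i)
      (- (τ * (Afun f v i - castv v i)) + τ * (Afun f w i - castv w i))
    rw [hexp]
    have h4 : |(- (τ * (Afun f v i - castv v i)) + τ * (Afun f w i - castv w i))|
        ≤ 4 * L := by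
      calc |(- (τ * (Afun f v i - castv v i)) + τ * (Afun f w i - castv w i))|
          ≤ |(- (τ * (Afun f v i - castv v i)))| + |τ * (Afun f w i - castv w i)| :=
            abs_add_le _ _
        _ ≤ 2 * L + 2 * L := by rw [abs_neg]; exact add_le_add h1 h2
        _ = 4 * L := by ring
    have h5 : castv v i - castv w i - (- (τ * (Afun f v i - castv v i))
        + τ * (Afun f w i - castv w i))
        = (castv v i - castv w i) + τ * (Afun f v i - castv v i)
          - τ * (Afun f w i - castv w i) := by ring
    rw [h5] at h3
    have h6 : (9:ℝ) * L - 4 * L ≤ |(castv v i - castv w i) + τ * (Afun f v i - castv v i)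
        - τ * (Afun f w i - castv w i)| := by linarith
    linarith
  linarith

lemma comover_leg2 (G : Good d L f) {v w : Lat d} (h : sv L f v = sv L f w)
    (hvw : v ≠ w) (s s' : ℝ) :
    (1:ℝ) ≤ dist (pt d (Afun f v) s) (pt d (Afun f w) s') := by
  have hL24 := hL24 G
  obtain ⟨i, hi, h9⟩ := comover_sep G h hvw
  have hdist := dist_pt_coord_ge hi (Afun f v) (Afun f w) s s'
  have hAv := coordA_close G v hi
  have hAw := coordA_close G w hi
  have hcoord : (1:ℝ) ≤ |Afun f v i - Afun f w i| := by
    have h3 := abs_sub_abs_le_abs_sub (castv v i - castv w i)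
      ((castv v i - Afun f v i) + (Afun f w i - castv w i))
    have h4 : castv v i - castv w i - ((castv v i - Afun f v i) + (Afun f w i - castv w i))
        = Afun f v i - Afun f w i := by ring
    rw [h4] at h3
    have h5 : |(castv v i - Afun f v i) + (Afun f w i - castv w i)| ≤ 4 * L := by
      calc |(castv v i - Afun f v i) + (Afun f w i - castv w i)|
          ≤ |castv v i - Afun f v i| + |Afun f w i - castv w i| := abs_add_le _ _
        _ ≤ 2 * L + 2 * L := by
            rw [abs_sub_comm (castv v i) (Afun f v i)]
            exact add_le_add hAv hAw
        _ = 4 * L := by ring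
    linarith
  linarith

/-- master dichotomy bound for two points sitting over their target columns -/
lemma Apt_sep (G : Good d L f) {v w : Lat d} (hvw : v ≠ w) {s s' : ℝ}
    (hs : 1/(2*(L:ℝ)) ≤ |tval f v - tval f w| →
      |tval f v - tval f w| / 16 ≤ |s - s'|) :
    1/(32*(L:ℝ)) ≤ dist (pt d (Afun f v) s) (pt d (Afun f w) s') := by
  have hL0 : (0:ℝ) < L := hL0 G
  by_cases hc : |tval f v - tval f w| < 1/(2*L)
  · have hps := pair_split G hvw
    have hhor : 1/(2*(L:ℝ)) ≤ dist (pt d (Afun f v) 0) (pt d (Afun f w) 0) := by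
      have : 1/(L:ℝ) - 1/(2*L) = 1/(2*L) := by field_simp; ring
      linarith
    have hge := dist_pt_hor_ge (Afun f v) (Afun f w) s s'
    have : 1/(32*(L:ℝ)) ≤ 1/(2*(L:ℝ)) := by
      apply one_div_le_one_div_of_le (by positivity)
      linarith
    linarith
  · push_neg at hc
    have h16 := hs hc
    have hge := dist_pt_last_ge (by have := G.hd; omega : 1 ≤ d) (Afun f v) (Afun f w) s s'
    have h1 : 1/(32*(L:ℝ)) ≤ |tval f v - tval f w| / 16 := by
      rw [div_le_div_iff₀ (by positivity) (by norm_num)]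
      calc (1:ℝ) * 16 = 16 := by ring
        _ ≤ 32 * L * (1/(2*L)) := by
            rw [show 32 * (L:ℝ) * (1/(2*L)) = 16 * (L / L) by ring,
              div_self (ne_of_gt hL0)]
            norm_num
        _ ≤ 32 * L * |tval f v - tval f w| := by
            apply mul_le_mul_of_nonneg_left hc (by positivity)
        _ = |tval f v - tval f w| * (32 * L) := by ring
    linarith

lemma sv_lt_rv (hL1 : 1 ≤ L) {v w : Lat d} (h : sv L f w < sv L f v) :
    rv L f w ≤ rv L f v := by
  by_contra hcon
  push_neg at hcon
  have hK := Kc_pos (d := d) hL1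
  have he := ellv_lt (d := d) hL1 v
  have h1 : sv L f v < sv L f w := by
    unfold sv
    calc rv L f v * Kc d L + ellv L v < rv L f v * Kc d L + Kc d L := by omega
      _ = (rv L f v + 1) * Kc d L := by ring
      _ ≤ rv L f w * Kc d L := Nat.mul_le_mul_right _ (by omega)
      _ ≤ rv L f w * Kc d L + ellv L w := by omega
  omega


-- ==================== the separation theorem ====================

set_option maxHeartbeats 2000000 in
lemma sep_aux (G : Good d L f) (k : ℕ) {v w : Lat d} (hvw : v ≠ w)
    (hsw : sv L f w ≤ sv L f v) :
    1/(32*(L:ℝ)) ≤ dist (pos L f v k) (pos L f w k) := by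
  have hd2 := G.hd
  have hL1 : 1 ≤ L := by have := G.hL; omega
  have hL24R := hL24 G
  have hτ0 : 0 ≤ tau L k := tau_nonneg (L := L) k
  have hτ1 : tau L k ≤ 1 := le_of_lt (tau_lt_one (L := L) hL1 k)
  have hκ16 : 1/(32*(L:ℝ)) ≤ 1/16 := by
    apply one_div_le_one_div_of_le (by norm_num)
    linarith
  have hbv := hval_bounds G v
  have hbw := hval_bounds G w
  have hsvv := sv_lt G v
  have hsvw := sv_lt G w
  by_cases hB : GS d L < k / mS L
  · rw [pos_done G hB, pos_done G hB]
    apply Apt_sep G hvw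
    intro hcl
    have habs : 0 ≤ |tval f v - tval f w| := abs_nonneg _
    linarith
  · by_cases hA : k / mS L = GS d L
    · rw [pos_final G hA, pos_final G hA]
      apply Apt_sep G hvw
      intro hcl
      have hfac : (hval f v + tau L k * (tval f v - hval f v))
          - (hval f w + tau L k * (tval f w - hval f w))
          = ((1 - tau L k)/16 + tau L k) * (tval f v - tval f w) := by
        unfold hval; ring
      rw [hfac, abs_mul,
        abs_of_nonneg (show (0:ℝ) ≤ (1 - tau L k)/16 + tau L k by linarith)]
      have hf1 : (1:ℝ)/16 ≤ (1 - tau L k)/16 + tau L k := by linarith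
      calc |tval f v - tval f w| / 16 = (1/16) * |tval f v - tval f w| := by ring
        _ ≤ ((1 - tau L k)/16 + tau L k) * |tval f v - tval f w| :=
            mul_le_mul_of_nonneg_right hf1 (abs_nonneg _)
    · have hgGS : k / mS L < GS d L := by omega
      by_cases h1 : k / mS L < 3 * sv L f w
      · rw [pos_before (show k / mS L < 3 * sv L f v by omega), pos_before h1]
        linarith [colint_sep hd2 hvw (0:ℝ) 0]
      · by_cases h2 : k / mS L ≤ 3 * sv L f w + 2
        · by_cases heq : sv L f v = sv L f w
          · rcases (show k / mS L = 3 * sv L f w ∨ k / mS L = 3 * sv L f w + 1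
                ∨ k / mS L = 3 * sv L f w + 2 by omega) with h3 | h3 | h3
            · rw [pos_leg0 (show k / mS L = 3 * sv L f v by omega),
                pos_leg0 h3]
              linarith [colint_sep hd2 hvw (tau L k * (3/4)) (tau L k * (3/4))]
            · rw [pos_leg1 (show k / mS L = 3 * sv L f v + 1 by omega), pos_leg1 h3]
              linarith [comover_leg1 G heq hvw hτ0 hτ1 (3/4 : ℝ) (3/4)]
            · rw [pos_leg2 G (show k / mS L = 3 * sv L f v + 2 by omega), pos_leg2 G h3]
              linarith [comover_leg2 G heq hvw (3/4 + tau L k * (hval f v - 3/4))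
                (3/4 + tau L k * (hval f w - 3/4))]
          · have hvb : k / mS L < 3 * sv L f v := by omega
            rw [pos_before hvb]
            rcases (show k / mS L = 3 * sv L f w ∨ k / mS L = 3 * sv L f w + 1
                ∨ k / mS L = 3 * sv L f w + 2 by omega) with h3 | h3 | h3
            · rw [pos_leg0 h3]
              linarith [colint_sep hd2 hvw (0:ℝ) (tau L k * (3/4))]
            · rw [pos_leg1 h3]
              have hlast := dist_pt_last_ge (by omega : 1 ≤ d) (castv v)
                (interp (tau L k) (castv w) (Afun f w)) 0 (3/4)
              rw [show |(0:ℝ) - 3/4| = 3/4 by norm_num] at hlast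
              linarith
            · rw [pos_leg2 G h3]
              have hht : 3/4 ≤ 3/4 + tau L k * (hval f w - 3/4) := by
                have := mul_nonneg hτ0 (show (0:ℝ) ≤ hval f w - 3/4 by linarith [hbw.1])
                linarith
              have hlast := dist_pt_last_ge (by omega : 1 ≤ d) (castv v) (Afun f w)
                0 (3/4 + tau L k * (hval f w - 3/4))
              have habs2 : |(0:ℝ) - (3/4 + tau L k * (hval f w - 3/4))|
                  = 3/4 + tau L k * (hval f w - 3/4) := by
                rw [abs_of_nonpos (by linarith)]; ring
              rw [habs2] at hlast
              linarith
        · have hwp : 3 * sv L f w + 2 < k / mS L := by omega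
          rw [pos_parked hwp hgGS]
          by_cases hv1 : k / mS L < 3 * sv L f v
          · rw [pos_before hv1]
            have hlast := dist_pt_last_ge (by omega : 1 ≤ d) (castv v) (Afun f w)
              0 (hval f w)
            have habs2 : |(0:ℝ) - hval f w| = hval f w := by
              rw [abs_of_nonpos (by linarith [hbw.1])]; ring
            rw [habs2] at hlast
            linarith [hbw.1]
          · by_cases hv2 : k / mS L = 3 * sv L f v
            · rw [pos_leg0 hv2]
              have hle34 : tau L k * (3/4) ≤ 3/4 := by linarith
              have hlast := dist_pt_last_ge (by omega : 1 ≤ d) (castv v) (Afun f w)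
                (tau L k * (3/4)) (hval f w)
              have habs2 : |tau L k * (3/4) - hval f w| = hval f w - tau L k * (3/4) := by
                rw [abs_of_nonpos (by linarith [hbw.1])]; ring
              rw [habs2] at hlast
              linarith [hbw.1]
            · by_cases hv3 : k / mS L = 3 * sv L f v + 1
              · rw [pos_leg1 hv3]
                have hlast := dist_pt_last_ge (by omega : 1 ≤ d)
                  (interp (tau L k) (castv v) (Afun f v)) (Afun f w) (3/4) (hval f w)
                have habs2 : |(3:ℝ)/4 - hval f w| = hval f w - 3/4 := by
                  rw [abs_of_nonpos (by linarith [hbw.1])]; ring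
                rw [habs2] at hlast
                linarith [hbw.1]
              · by_cases hv4 : k / mS L = 3 * sv L f v + 2
                · rw [pos_leg2 G hv4]
                  apply Apt_sep G hvw
                  intro hcl
                  have hsvlt : sv L f w < sv L f v := by omega
                  have hrle := sv_lt_rv (f := f) hL1 hsvlt
                  have hrne : rv L f w ≠ rv L f v := by
                    intro hre
                    have := rv_eq_close G (hre.symm)
                    linarith
                  have hrlt : rv L f w < rv L f v := by omega
                  have htlt := rv_lt_t G hrlt
                  have h16 : |tval f v - tval f w| = tval f w - tval f v := by
                    rw [abs_of_nonpos (by linarith)]; ring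
                  have hsle : 3/4 + tau L k * (hval f v - 3/4) ≤ hval f v := by
                    have h0 : (0:ℝ) ≤ hval f v - 3/4 := by linarith [hbv.1]
                    have := mul_le_mul_of_nonneg_right hτ1 h0
                    linarith
                  have hgap : hval f w - hval f v = (tval f w - tval f v)/16 := by
                    unfold hval; ring
                  have htge : 1/(2*(L:ℝ)) ≤ tval f w - tval f v := by
                    rw [h16] at hcl; linarith
                  have habs2 : |3/4 + tau L k * (hval f v - 3/4) - hval f w|
                      = hval f w - (3/4 + tau L k * (hval f v - 3/4)) := by
                    rw [abs_of_nonpos (by linarith)]; ring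
                  rw [habs2, h16]
                  linarith
                · have hvp : 3 * sv L f v + 2 < k / mS L := by omega
                  rw [pos_parked hvp hgGS]
                  apply Apt_sep G hvw
                  intro hcl
                  have hgap : hval f v - hval f w = (tval f v - tval f w)/16 := by
                    unfold hval; ring
                  rw [hgap, abs_div]
                  rw [show |(16:ℝ)| = 16 by norm_num]

lemma sep (G : Good d L f) (k : ℕ) {v w : Lat d} (hvw : v ≠ w) :
    1/(32*(L:ℝ)) ≤ dist (pos L f v k) (pos L f w k) := by
  rcases le_total (sv L f w) (sv L f v) with hsw | hsw
  · exact sep_aux G k hvw hsw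
  · rw [dist_comm]
    exact sep_aux G k (Ne.symm hvw) hsw


-- ==================== step size ====================

lemma interp_one (u w : Fin d → ℝ) : interp 1 u w = w := by
  funext i; unfold interp; ring

lemma pos_succ_eq (hL1 : 1 ≤ L) (v : Lat d) (k : ℕ) :
    pos L f v (k+1)
      = pt d (interp ((((k % mS L : ℕ) : ℝ) + 1)/((mS L : ℕ) : ℝ))
          (colW L f v (k / mS L)) (colW L f v (k / mS L + 1)))
        (htW L f v (k / mS L) + ((((k % mS L : ℕ) : ℝ) + 1)/((mS L : ℕ) : ℝ))
          * (htW L f v (k / mS L + 1) - htW L f v (k / mS L))) := by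
  have hm : 0 < mS L := mS_pos hL1
  have hdm := Nat.div_add_mod k (mS L)
  have hrlt : k % mS L < mS L := Nat.mod_lt _ hm
  by_cases hcase : k % mS L + 1 < mS L
  · have hdiv : (k+1) / mS L = k / mS L := by
      rw [show k + 1 = mS L * (k / mS L) + (k % mS L + 1) by omega,
        Nat.mul_add_div hm, Nat.div_eq_of_lt hcase]
      omega
    have hmod : (k+1) % mS L = k % mS L + 1 := by
      rw [show k + 1 = mS L * (k / mS L) + (k % mS L + 1) by omega,
        Nat.mul_add_mod, Nat.mod_eq_of_lt hcase]
    unfold pos tau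
    rw [hdiv, hmod]
    push_cast
    ring_nf
  · have hr : k % mS L + 1 = mS L := by omega
    have hmul : mS L * (k / mS L + 1) = mS L * (k / mS L) + mS L := by ring
    have hdiv : (k+1) / mS L = k / mS L + 1 := by
      rw [show k + 1 = mS L * (k / mS L + 1) by omega, Nat.mul_div_cancel_left _ hm]
    have hmod : (k+1) % mS L = 0 := by
      rw [show k + 1 = mS L * (k / mS L + 1) by omega]
      exact Nat.mul_mod_right _ _
    have hmR : (0:ℝ) < ((mS L : ℕ) : ℝ) := by exact_mod_cast hm
    have hτ1 : (((k % mS L : ℕ) : ℝ) + 1)/((mS L : ℕ) : ℝ) = 1 := by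
      have hcast : (((k % mS L : ℕ) : ℝ) + 1) = ((mS L : ℕ) : ℝ) := by exact_mod_cast hr
      rw [hcast, div_self (ne_of_gt hmR)]
    unfold pos tau
    rw [hdiv, hmod, hτ1, interp_one]
    rw [Nat.cast_zero, zero_div, interp_zero]
    congr 1
    ring

lemma htW_bound (G : Good d L f) (v : Lat d) (g : ℕ) :
    |htW L f v g| ≤ 1 - 1/(L:ℝ) := by
  have hL24R := hL24 G
  have hb := hval_bounds G v
  have ht := tval_bounds G v
  have hinv : 1/(L:ℝ) ≤ 1/24 := by
    apply one_div_le_one_div_of_le (by norm_num) hL24R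
  have hinv0 : 0 < 1/(L:ℝ) := by
    have := hL0 G; positivity
  unfold htW
  split_ifs
  · rw [abs_of_nonneg le_rfl]; linarith
  · rw [show |(3:ℝ)/4| = 3/4 by norm_num]; linarith
  · rw [show |(3:ℝ)/4| = 3/4 by norm_num]; linarith
  · rw [abs_of_nonneg (by linarith [hb.1])]; linarith [hb.2]
  · rw [abs_le]; constructor <;> [linarith [ht.1]; linarith [ht.2]]

lemma pos_ht_bound (G : Good d L f) (v : Lat d) (k : ℕ) :
    ∃ (u : Fin d → ℝ) (s : ℝ), pos L f v k = pt d u s ∧ |s| ≤ 1 - 1/(L:ℝ) := by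
  have hL1 : 1 ≤ L := by have := G.hL; have := G.hd; omega
  have hτ0 : 0 ≤ tau L k := tau_nonneg (L := L) k
  have hτ1 : tau L k ≤ 1 := le_of_lt (tau_lt_one (L := L) hL1 k)
  refine ⟨_, _, rfl, ?_⟩
  have h1 := htW_bound G v (k / mS L)
  have h2 := htW_bound G v (k / mS L + 1)
  have hexp : htW L f v (k / mS L) + tau L k * (htW L f v (k / mS L + 1) - htW L f v (k / mS L))
      = (1 - tau L k) * htW L f v (k / mS L) + tau L k * htW L f v (k / mS L + 1) := by ring
  rw [hexp]
  calc |(1 - tau L k) * htW L f v (k / mS L) + tau L k * htW L f v (k / mS L + 1)|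
      ≤ |(1 - tau L k) * htW L f v (k / mS L)| + |tau L k * htW L f v (k / mS L + 1)| :=
        abs_add_le _ _
    _ = (1 - tau L k) * |htW L f v (k / mS L)| + tau L k * |htW L f v (k / mS L + 1)| := by
        rw [abs_mul, abs_mul, abs_of_nonneg (by linarith), abs_of_nonneg hτ0]
    _ ≤ (1 - tau L k) * (1 - 1/(L:ℝ)) + tau L k * (1 - 1/(L:ℝ)) := by
        apply add_le_add
        · exact mul_le_mul_of_nonneg_left h1 (by linarith)
        · exact mul_le_mul_of_nonneg_left h2 hτ0
    _ = 1 - 1/(L:ℝ) := by ring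

lemma colW_dist (G : Good d L f) (v : Lat d) (g : ℕ) :
    dist (pt d (colW L f v g) 0) (pt d (colW L f v (g+1)) 0) ≤ 2 * L := by
  have hkey := (key1 G v).2.2
  by_cases h1 : g ≤ 3 * sv L f v + 1
  · by_cases h2 : g + 1 ≤ 3 * sv L f v + 1
    · rw [colW_lo h1, colW_lo h2, dist_self]
      positivity
    · rw [colW_lo h1, colW_hi (by omega)]
      exact hkey
  · rw [colW_hi (by omega), colW_hi (by omega), dist_self]
    positivity

lemma htW_step (G : Good d L f) (v : Lat d) (g : ℕ) :
    |htW L f v (g+1) - htW L f v g| ≤ 2 := by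
  have hL24R := hL24 G
  have h1 := htW_bound G v g
  have h2 := htW_bound G v (g+1)
  have hinv0 : 0 < 1/(L:ℝ) := by have := hL0 G; positivity
  have habs : |htW L f v (g+1) - htW L f v g| ≤ |htW L f v (g+1)| + |htW L f v g| := by
    have h3 := abs_add_le (htW L f v (g+1)) (-(htW L f v g))
    rwa [abs_neg, ← sub_eq_add_neg] at h3
  linarith

lemma pos_step (G : Good d L f) (v : Lat d) (k : ℕ) :
    dist (pos L f v (k+1)) (pos L f v k) ≤ 1/(32*(L:ℝ))/6 := by
  have hL1 : 1 ≤ L := by have := G.hL; have := G.hd; omega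
  have hL24R := hL24 G
  have hL0R : (0:ℝ) < L := hL0 G
  have hm : 0 < mS L := mS_pos hL1
  have hmR : (0:ℝ) < ((mS L : ℕ) : ℝ) := by exact_mod_cast hm
  rw [pos_succ_eq hL1 v k]
  unfold pos
  set c := colW L f v (k / mS L) with hc
  set c1 := colW L f v (k / mS L + 1) with hc1
  set a := htW L f v (k / mS L) with ha
  set a1 := htW L f v (k / mS L + 1) with ha1
  set τ := tau L k with hτ
  set τ' := (((k % mS L : ℕ) : ℝ) + 1)/((mS L : ℕ) : ℝ) with hτ'
  have hττ : τ' - τ = 1/((mS L : ℕ) : ℝ) := by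
    rw [hτ', hτ]
    unfold tau
    field_simp
    ring
  have hcol : dist (pt d c 0) (pt d c1 0) ≤ 2 * L := colW_dist G v (k / mS L)
  have hht : |a1 - a| ≤ 2 := htW_step G v (k / mS L)
  have h1 : dist (pt d (interp τ' c c1) (a + τ' * (a1 - a)))
      (pt d (interp τ c c1) (a + τ * (a1 - a)))
      ≤ dist (pt d (interp τ' c c1) 0) (pt d (interp τ c c1) 0)
        + |(a + τ' * (a1 - a)) - (a + τ * (a1 - a))| := dist_pt_le _ _ _ _
  have h2 : dist (pt d (interp τ' c c1) 0) (pt d (interp τ c c1) 0)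
      = |τ' - τ| * dist (pt d c 0) (pt d c1 0) := dist_pt_interp _ _ _ _ _
  have h3 : |(a + τ' * (a1 - a)) - (a + τ * (a1 - a))| = |τ' - τ| * |a1 - a| := by
    rw [show (a + τ' * (a1 - a)) - (a + τ * (a1 - a)) = (τ' - τ) * (a1 - a) by ring,
      abs_mul]
  have habs : |τ' - τ| = 1/((mS L : ℕ) : ℝ) := by
    rw [hττ, abs_of_nonneg (by positivity)]
  have h4 : |τ' - τ| * dist (pt d c 0) (pt d c1 0) + |τ' - τ| * |a1 - a|
      ≤ (1/((mS L : ℕ) : ℝ)) * (2 * L) + (1/((mS L : ℕ) : ℝ)) * 2 := by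
    rw [habs]
    apply add_le_add
    · exact mul_le_mul_of_nonneg_left hcol (by positivity)
    · exact mul_le_mul_of_nonneg_left hht (by positivity)
  have h5 : (1/((mS L : ℕ) : ℝ)) * (2 * L) + (1/((mS L : ℕ) : ℝ)) * 2
      ≤ 1/(32*(L:ℝ))/6 := by
    have hmS : ((mS L : ℕ) : ℝ) = 600 * (L:ℝ)^2 := by
      unfold mS; push_cast; ring
    rw [hmS, show (1:ℝ)/(32*(L:ℝ))/6 = 1/(192*L) by ring]
    rw [div_mul_eq_mul_div, div_mul_eq_mul_div, ← add_div,
      div_le_div_iff₀ (by positivity) (by positivity)]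
    nlinarith [hL24R, hL0R]
  linarith [h1, h2, h3, h4, h5]


-- ==================== assembly ====================

lemma wall_far (G : Good d L f) {x : EuclideanSpace ℝ (Fin d)}
    (hx : x ∈ wallSet d (by have := G.hd; omega)) (v : Lat d) (k : ℕ) :
    1/(32*(L:ℝ))/3 ≤ dist x (pos L f v k) := by
  have hL24R := hL24 G
  have hL0R : (0:ℝ) < L := hL0 G
  have hinv : (0:ℝ) < 1/(L:ℝ) := by positivity
  obtain ⟨u, s, heq, hs⟩ := pos_ht_bound G v k
  have hcoord := coord_le x (pos L f v k) ⟨d - 1, by have := G.hd; omega⟩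
  have hlast : pos L f v k ⟨d - 1, by have := G.hd; omega⟩ = s := by
    rw [heq]
    exact pt_coord_last (by simp)
  have hxlast : x ⟨d - 1, by have := G.hd; omega⟩ = -1 ∨
      x ⟨d - 1, by have := G.hd; omega⟩ = 1 := hx
  have h1 : 1/(L:ℝ) ≤ dist (x ⟨d - 1, by have := G.hd; omega⟩) s := by
    rw [Real.dist_eq]
    rcases hxlast with h | h <;> rw [h] <;> rw [abs_le] at hs <;>
      [rw [abs_of_nonpos (by linarith)]; rw [abs_of_nonneg (by linarith)]] <;> linarith
  have h2 : 1/(32*(L:ℝ))/3 ≤ 1/(L:ℝ) := by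
    rw [show (1:ℝ)/(32*(L:ℝ))/3 = 1/(96*L) by ring]
    apply one_div_le_one_div_of_le hL0R
    nlinarith
  rw [hlast] at hcoord
  linarith

def Fc (L : ℕ) (f : EuclideanSpace ℝ (Fin d) → EuclideanSpace ℝ (Fin d)) :
    ℕ → EuclideanSpace ℝ (Fin d) → EuclideanSpace ℝ (Fin d)
  | 0 => id
  | (k+1) => (S14X.bumpMap (1/(32*(L:ℝ))) (fun v : Lat d => pos L f v k)
      (fun v : Lat d => pos L f v (k+1))) ∘ Fc L f k

lemma κpos (G : Good d L f) : (0:ℝ) < 1/(32*(L:ℝ)) := by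
  have := hL0 G; positivity

lemma Fc_lat (G : Good d L f) (k : ℕ) (v : Lat d) :
    Fc L f k (latPt v) = pos L f v k := by
  induction k with
  | zero => rw [pos_start]; rfl
  | succ k ih =>
    show S14X.bumpMap (1/(32*(L:ℝ))) (fun v : Lat d => pos L f v k)
        (fun v : Lat d => pos L f v (k+1)) (Fc L f k (latPt v)) = pos L f v (k+1)
    rw [ih]
    exact S14X.bumpMap_at (1/(32*(L:ℝ))) (fun v : Lat d => pos L f v k)
      (fun v : Lat d => pos L f v (k+1)) (κpos G)
      (fun a b hab => sep G k hab) (fun a => pos_step G a k) v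

lemma Fc_wall (G : Good d L f) (k : ℕ) {x : EuclideanSpace ℝ (Fin d)}
    (hx : x ∈ wallSet d (by have := G.hd; omega)) :
    Fc L f k x = x := by
  induction k with
  | zero => rfl
  | succ k ih =>
    show S14X.bumpMap (1/(32*(L:ℝ))) (fun v : Lat d => pos L f v k)
        (fun v : Lat d => pos L f v (k+1)) (Fc L f k x) = x
    rw [ih]
    exact S14X.bumpMap_far (1/(32*(L:ℝ))) (fun v : Lat d => pos L f v k)
      (fun v : Lat d => pos L f v (k+1)) (κpos G)
      (fun a b hab => sep G k hab) (fun a => pos_step G a k)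
      (fun v => wall_far G hx v k)

lemma bilip_id : IsBilipOn (1:ℝ) (id : EuclideanSpace ℝ (Fin d) → EuclideanSpace ℝ (Fin d))
    Set.univ := by
  intro x _ y _
  simp

lemma bilip_comp {α : Type*} [PseudoMetricSpace α] {A B : ℝ} (hA : 0 < A) (hB : 0 < B)
    {F Gm : α → α} (hF : IsBilipOn A F Set.univ) (hG : IsBilipOn B Gm Set.univ) :
    IsBilipOn (B * A) (Gm ∘ F) Set.univ := by
  intro x _ y _
  obtain ⟨hF1, hF2⟩ := hF x (Set.mem_univ x) y (Set.mem_univ y)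
  obtain ⟨hG1, hG2⟩ := hG (F x) (Set.mem_univ _) (F y) (Set.mem_univ _)
  constructor
  · calc (1/(B*A)) * dist x y = (1/B) * ((1/A) * dist x y) := by
          field_simp
      _ ≤ (1/B) * dist (F x) (F y) := by
          apply mul_le_mul_of_nonneg_left hF1 (by positivity)
      _ ≤ dist (Gm (F x)) (Gm (F y)) := hG1
  · calc dist (Gm (F x)) (Gm (F y)) ≤ B * dist (F x) (F y) := hG2
      _ ≤ B * (A * dist x y) := by
          apply mul_le_mul_of_nonneg_left hF2 (le_of_lt hB)
      _ = (B * A) * dist x y := by ring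

lemma bilip_mono {α β : Type*} [PseudoMetricSpace α] [PseudoMetricSpace β] {A B : ℝ}
    (hA : 0 < A) (hAB : A ≤ B) {F : α → β} {s : Set α} (h : IsBilipOn A F s) :
    IsBilipOn B F s := by
  intro x hx y hy
  obtain ⟨h1, h2⟩ := h x hx y hy
  have hB : 0 < B := lt_of_lt_of_le hA hAB
  have hd0 : (0:ℝ) ≤ dist x y := dist_nonneg
  have hle : 1/B ≤ 1/A := one_div_le_one_div_of_le hA hAB
  constructor
  · have := mul_le_mul_of_nonneg_right hle hd0
    linarith
  · have := mul_le_mul_of_nonneg_right hAB hd0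
    linarith

lemma Fc_bilip (G : Good d L f) (k : ℕ) :
    IsBilipOn ((2:ℝ)^k) (Fc L f k) Set.univ := by
  induction k with
  | zero => rw [pow_zero]; exact bilip_id
  | succ k ih =>
    have hstep : IsBilipOn 2 (S14X.bumpMap (1/(32*(L:ℝ))) (fun v : Lat d => pos L f v k)
        (fun v : Lat d => pos L f v (k+1))) Set.univ :=
      S14X.bumpMap_bilip (1/(32*(L:ℝ))) (fun v : Lat d => pos L f v k)
        (fun v : Lat d => pos L f v (k+1)) (κpos G)
        (fun a b hab => sep G k hab) (fun a => pos_step G a k)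
    have := bilip_comp (by positivity : (0:ℝ) < 2^k) (by norm_num : (0:ℝ) < 2) ih hstep
    rw [show (2:ℝ) * 2^k = 2^(k+1) by ring] at this
    exact this

lemma NS_le (hd : 2 ≤ d) (hL1 : 1 ≤ L) :
    NS d L ≤ 2^3 * 3^(33*d) * d^(2*d) * L^(26*d) := by
  have hK1 : 1 ≤ Kc d L := Kc_pos (d := d) hL1
  have hLK : 1 ≤ L * Kc d L := Nat.one_le_iff_ne_zero.2 (by positivity)
  have hGS : GS d L = 12 * (L * Kc d L) := by unfold GS; ring
  have hA : GS d L + 1 ≤ 13 * (L * Kc d L) := by omega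
  have hB : NS d L ≤ 13 * (L * Kc d L) * (600 * L^2) := by
    unfold NS mS
    exact Nat.mul_le_mul_right _ hA
  have hC : 13 * (L * Kc d L) * (600 * L^2) = 7800 * 9^(d-1) * L^(d+2) := by
    unfold Kc
    rw [mul_pow]
    calc 13 * (L * (9^(d-1) * L^(d-1))) * (600 * L^2)
        = 7800 * 9^(d-1) * ((L^1 * L^(d-1)) * L^2) := by ring
      _ = 7800 * 9^(d-1) * L^(d+2) := by
          rw [← pow_add, ← pow_add]
          congr 2
          omega
  have hD : 7800 * 9^(d-1) ≤ 2^3 * 3^(33*d) := by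
    have h9 : (9:ℕ)^(d-1) = 3^(2*(d-1)) := by
      rw [show (9:ℕ) = 3^2 by norm_num, ← pow_mul]
    rw [h9]
    have hsplit : 33*d = (2*(d-1)) + (31*d + 2) := by omega
    rw [hsplit, pow_add]
    have h78 : 7800 ≤ 2^3 * 3^(31*d+2) := by
      calc 7800 ≤ 2^3 * 3^8 := by norm_num
        _ ≤ 2^3 * 3^(31*d+2) := by
            apply Nat.mul_le_mul_left
            apply Nat.pow_le_pow_right (by norm_num)
            omega
    calc 7800 * 3^(2*(d-1)) ≤ (2^3 * 3^(31*d+2)) * 3^(2*(d-1)) :=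
          Nat.mul_le_mul_right _ h78
      _ = 2^3 * (3^(2*(d-1)) * 3^(31*d+2)) := by ring
  have hE : L^(d+2) ≤ L^(26*d) := Nat.pow_le_pow_right hL1 (by omega)
  have hF : (1:ℕ) ≤ d^(2*d) := Nat.one_le_iff_ne_zero.2 (by positivity)
  calc NS d L ≤ 7800 * 9^(d-1) * L^(d+2) := by rw [← hC]; exact hB
    _ ≤ (2^3 * 3^(33*d)) * L^(26*d) :=
        Nat.mul_le_mul hD hE
    _ = (2^3 * 3^(33*d)) * 1 * L^(26*d) := by ring
    _ ≤ (2^3 * 3^(33*d)) * d^(2*d) * L^(26*d) := by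
        apply Nat.mul_le_mul_right
        exact Nat.mul_le_mul_left _ hF
    _ = 2^3 * 3^(33*d) * d^(2*d) * L^(26*d) := by ring

end S14

theorem stmt14 (d L : ℕ) (hd : 2 ≤ d) (hL : 12 * d ≤ L)
    (f : EuclideanSpace ℝ (Fin d) → EuclideanSpace ℝ (Fin d))
    (hf : IsBilipOn (L : ℝ) f
      (wallSet d (by omega) ∪ midLattice d (by omega)))
    (hid : ∀ x ∈ wallSet d (by omega : 1 ≤ d), f x = x)
    (hrange : ∀ x ∈ midLattice d (by omega : 1 ≤ d),
      f x ⟨d - 1, by omega⟩ ∈ Set.Icc (-1 : ℝ) 1) :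
    ∃ F : EuclideanSpace ℝ (Fin d) → EuclideanSpace ℝ (Fin d),
      IsBilipOn
        ((2 : ℝ) ^ 14 * d * (L : ℝ) ^ 8 *
          (2 : ℝ) ^ (2 ^ 3 * 3 ^ (33 * d) * d ^ (2 * d) * L ^ (26 * d)))
        F Set.univ ∧
      Set.EqOn F f (wallSet d (by omega) ∪ midLattice d (by omega)) := by
  have G : S14.Good d L f := ⟨hd, hL, hf, hid, hrange⟩
  have hL1 : 1 ≤ L := by omega
  refine ⟨S14.Fc L f (S14.NS d L), ?_, ?_⟩
  · have hb := S14.Fc_bilip G (S14.NS d L)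
    have hNS := S14.NS_le hd hL1
    have h2 : (2:ℝ)^(S14.NS d L) ≤ (2:ℝ)^(2^3 * 3^(33*d) * d^(2*d) * L^(26*d)) :=
      pow_le_pow_right₀ (by norm_num : (1:ℝ) ≤ 2) hNS
    have hd1 : (1:ℝ) ≤ (d:ℝ) := by exact_mod_cast (by omega : 1 ≤ d)
    have hL1R : (1:ℝ) ≤ (L:ℝ) := by exact_mod_cast hL1
    have hone : (1:ℝ) ≤ (2:ℝ)^14 * d * (L:ℝ)^8 := by
      have h14 : (1:ℝ) ≤ (2:ℝ)^14 := by norm_num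
      have hL8 : (1:ℝ) ≤ (L:ℝ)^8 := one_le_pow₀ hL1R
      nlinarith
    have hle : (2:ℝ)^(S14.NS d L)
        ≤ (2 : ℝ) ^ 14 * d * (L : ℝ) ^ 8 *
          (2 : ℝ) ^ (2 ^ 3 * 3 ^ (33 * d) * d ^ (2 * d) * L ^ (26 * d)) := by
      calc (2:ℝ)^(S14.NS d L) ≤ (2:ℝ)^(2^3 * 3^(33*d) * d^(2*d) * L^(26*d)) := h2
        _ = 1 * (2:ℝ)^(2^3 * 3^(33*d) * d^(2*d) * L^(26*d)) := (one_mul _).symm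
        _ ≤ (2 : ℝ) ^ 14 * d * (L : ℝ) ^ 8 *
            (2 : ℝ) ^ (2 ^ 3 * 3 ^ (33 * d) * d ^ (2 * d) * L ^ (26 * d)) :=
          mul_le_mul_of_nonneg_right hone (by positivity)
    exact S14.bilip_mono (by positivity : (0:ℝ) < (2:ℝ)^(S14.NS d L)) hle hb
  · intro x hx
    rcases hx with hxw | hxm
    · rw [S14.Fc_wall G (S14.NS d L) hxw, hid x hxw]
    · have hxm' : x ∈ Set.range (S14.latPt (d := d)) := by
        rw [← S14.mid_eq_range (by omega : 1 ≤ d)]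
        exact hxm
      obtain ⟨v, rfl⟩ := hxm'
      rw [S14.Fc_lat G (S14.NS d L) v, S14.pos_end G v]

end
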